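/- For any valid stochastic schedule with limiting relative test frequencies q_i, and for any element e with Q_e = Σ_{i : e ∈ S_i} q_i > 0, the long-run average expected detection time Ē_t[T(e,t)] is at least 1/(2 Q_e). Consequently the optimal memoryless value Σ_e p_e/Q_e* is at most twice the stochastic optimum of the weighted-sum objective. -/

import Mathlib

open Finset Filter MeasureTheory
open scoped ENNReal Topology Classical

/-- The waiting time (number of probes, counted from 1) of element `e` from
time `t` along the realized test sequence `σ`; `∞` if `e` is never tested. -/
noncomputable def waitFn {E : Type*} {m : ℕ} (S : Fin m → Finset E) (e : E)
    (t : ℕ) (σ : ℕ → Fin m) : ℝ≥0∞ :=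
  ∑' s : ℕ, if ∀ u < s, e ∉ S (σ (t + u)) then 1 else 0

namespace Stmt5Aux

variable {E : Type*} {m : ℕ}

/-- age-plus-one counter, resets after a test -/
noncomputable def cfn (S : Fin m → Finset E) (e : E) (σ : ℕ → Fin m) : ℕ → ℕ
  | 0 => 1
  | v + 1 => if e ∈ S (σ v) then 1 else cfn S e σ v + 1

/-- number of tests containing e up to time h (exclusive) -/
noncomputable def Ncnt (S : Fin m → Finset E) (e : E) (σ : ℕ → Fin m) (h : ℕ) : ℕ :=
  ((Finset.range h).filter fun v => e ∈ S (σ v)).card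

variable {S : Fin m → Finset E} {e : E} {σ : ℕ → Fin m}

lemma cfn_pos (v : ℕ) : 1 ≤ cfn S e σ v := by
  cases v with
  | zero => simp [cfn]
  | succ v => simp only [cfn]; split <;> omega

lemma cfn_eq_card (v : ℕ) :
    cfn S e σ v =
      ((Finset.range (v+1)).filter fun t => ∀ w, t ≤ w → w < v → e ∉ S (σ w)).card := by
  induction v with
  | zero => simp [cfn]
  | succ v ih =>
    have hsplit : (Finset.range (v+2)).filter
        (fun t => ∀ w, t ≤ w → w < v+1 → e ∉ S (σ w)) =
        insert (v+1) ((Finset.range (v+1)).filter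
          (fun t => ∀ w, t ≤ w → w < v+1 → e ∉ S (σ w))) := by
      rw [Finset.range_add_one, Finset.filter_insert, if_pos]
      intro w hw hw'; omega
    rw [hsplit, Finset.card_insert_of_notMem (by simp)]
    by_cases hv : e ∈ S (σ v)
    · have : (Finset.range (v+1)).filter
          (fun t => ∀ w, t ≤ w → w < v+1 → e ∉ S (σ w)) = ∅ := by
        apply Finset.filter_false_of_mem
        intro t ht hall
        exact (hall v (by simp at ht; omega) (by omega)) hv
      rw [this]; simp [cfn, hv]
    · have : (Finset.range (v+1)).filter
          (fun t => ∀ w, t ≤ w → w < v+1 → e ∉ S (σ w)) =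
          (Finset.range (v+1)).filter
          (fun t => ∀ w, t ≤ w → w < v → e ∉ S (σ w)) := by
        apply Finset.filter_congr
        intro t ht
        constructor
        · intro hall w hw hw'; exact hall w hw (by omega)
        · intro hall w hw hw'
          rcases Nat.lt_or_ge w v with h1 | h1
          · exact hall w hw h1
          · have : w = v := by omega
            subst this; exact hv
      simp only [cfn, if_neg hv, this, ih]

lemma cfn_add (v d : ℕ) (hno : ∀ u, v ≤ u → u < v + d → e ∉ S (σ u)) :
    cfn S e σ (v + d) = cfn S e σ v + d := by
  induction d with
  | zero => rfl
  | succ d ih =>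
    have : cfn S e σ (v + d + 1) = cfn S e σ (v + d) + 1 := by
      simp only [cfn, if_neg (hno (v+d) (by omega) (by omega))]
    rw [show v + (d+1) = v + d + 1 by omega, this,
      ih (fun u hu hu' => hno u hu (by omega))]
    omega

lemma Ncnt_mono {a b : ℕ} (h : a ≤ b) : Ncnt S e σ a ≤ Ncnt S e σ b :=
  Finset.card_le_card (Finset.filter_subset_filter _ (by simpa using Finset.range_subset_range.2 h))

lemma Ncnt_lt_of_tested {a b u : ℕ} (hau : a ≤ u) (hub : u < b) (hu : e ∈ S (σ u)) :
    Ncnt S e σ a < Ncnt S e σ b := by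
  have h1 : Ncnt S e σ (u+1) = Ncnt S e σ u + 1 := by
    unfold Ncnt
    rw [Finset.range_add_one, Finset.filter_insert, if_pos hu,
      Finset.card_insert_of_notMem (by simp)]
  have h2 := Ncnt_mono (S := S) (e := e) (σ := σ) hau
  have h3 := Ncnt_mono (S := S) (e := e) (σ := σ) (show u + 1 ≤ b by omega)
  omega

end Stmt5Aux

namespace Stmt5Aux
variable {E : Type*} {m : ℕ} {S : Fin m → Finset E} {e : E} {σ : ℕ → Fin m}

lemma card_small_le (h k : ℕ) :
    ((Finset.range h).filter fun v => cfn S e σ v ≤ k).card ≤ (Ncnt S e σ h + 1) * k := by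
  classical
  have := Finset.card_le_card_of_injOn
    (f := fun v => (Ncnt S e σ v, cfn S e σ v - 1))
    (s := (Finset.range h).filter fun v => cfn S e σ v ≤ k)
    (t := (Finset.range (Ncnt S e σ h + 1)) ×ˢ (Finset.range k))
    ?_ ?_
  · simpa [Finset.card_product] using this
  · intro v hv
    simp only [Finset.mem_coe, Finset.mem_filter, Finset.mem_range] at hv
    simp only [Finset.mem_coe, Finset.mem_product, Finset.mem_range]
    have h1 := cfn_pos (S := S) (e := e) (σ := σ) v
    have h2 := Ncnt_mono (S := S) (e := e) (σ := σ) (le_of_lt hv.1)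
    exact ⟨by omega, by omega⟩
  · intro v hv w hw heq
    simp only [Finset.mem_coe, Finset.mem_filter, Finset.mem_range] at hv hw
    simp only [Prod.mk.injEq] at heq
    have h1 := cfn_pos (S := S) (e := e) (σ := σ) v
    have h2 := cfn_pos (S := S) (e := e) (σ := σ) w
    have hcfn : cfn S e σ v = cfn S e σ w := by omega
    by_contra hne
    -- wlog v < w
    rcases Nat.lt_or_ge v w with hlt | hge
    · have hno : ∀ u, v ≤ u → u < w → e ∉ S (σ u) := by
        intro u hu hu' hmem
        exact absurd heq.1 (Nat.ne_of_lt (Ncnt_lt_of_tested hu hu' hmem))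
      have := cfn_add (S := S) (e := e) (σ := σ) v (w - v)
        (by intro u hu hu'; exact hno u hu (by omega))
      rw [show v + (w - v) = w by omega] at this
      omega
    · have hlt : w < v := by omega
      have hno : ∀ u, w ≤ u → u < v → e ∉ S (σ u) := by
        intro u hu hu' hmem
        exact absurd heq.1.symm (Nat.ne_of_lt (Ncnt_lt_of_tested hu hu' hmem))
      have := cfn_add (S := S) (e := e) (σ := σ) w (v - w)
        (by intro u hu hu'; exact hno u hu (by omega))
      rw [show w + (v - w) = v by omega] at this
      omega

lemma key_nat (h : ℕ) :
    h * h ≤ 2 * (Ncnt S e σ h + 1) * ∑ v ∈ Finset.range h, cfn S e σ v := by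
  classical
  set D := Ncnt S e σ h + 1 with hD
  have hDpos : 0 < D := by omega
  set K := h / D + 1 with hK
  have hDK : h ≤ D * K := by
    have h1 : h < K * D := by
      rw [← Nat.div_lt_iff_lt_mul hDpos]
      omega
    calc h ≤ K * D := le_of_lt h1
      _ = D * K := Nat.mul_comm _ _
  have hDK1 : D * (K - 1) ≤ h := by
    rw [hK, Nat.add_sub_cancel]
    exact Nat.mul_div_le h D
  -- min as a sum of indicators
  have hmin : ∀ c, min c K = ∑ k ∈ Finset.range K, (if k < c then 1 else 0) := by
    intro c
    rw [← Finset.card_filter]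
    have : (Finset.range K).filter (fun k => k < c) = Finset.range (min c K) := by
      ext k; simp only [Finset.mem_filter, Finset.mem_range, lt_min_iff]; omega
    rw [this, Finset.card_range]
  -- layer-cake lower bound
  have hlayer : ∑ k ∈ Finset.range K, (h - D * k) ≤ ∑ v ∈ Finset.range h, cfn S e σ v := by
    calc ∑ k ∈ Finset.range K, (h - D * k)
        ≤ ∑ k ∈ Finset.range K, ((Finset.range h).filter fun v => k < cfn S e σ v).card := by
          apply Finset.sum_le_sum
          intro k _
          have hsplit := Finset.card_filter_add_card_filter_not
            (s := Finset.range h) (p := fun v => k < cfn S e σ v)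
          simp only [not_lt, Finset.card_range] at hsplit
          have hneg : ((Finset.range h).filter fun v => cfn S e σ v ≤ k).card
              ≤ D * k := by
            rw [hD]
            exact card_small_le h k
          omega
      _ = ∑ v ∈ Finset.range h, ∑ k ∈ Finset.range K, (if k < cfn S e σ v then 1 else 0) := by
          rw [Finset.sum_comm]
          apply Finset.sum_congr rfl
          intro k _
          rw [← Finset.card_filter]
      _ ≤ ∑ v ∈ Finset.range h, cfn S e σ v := by
          apply Finset.sum_le_sum
          intro v _
          rw [← hmin]
          exact Nat.min_le_left _ _
  -- pairing bound : K * h ≤ 2 * ∑_{k<K} (h - D k)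
  have hpair : K * h ≤ 2 * ∑ k ∈ Finset.range K, (h - D * k) := by
    have hrefl : ∑ k ∈ Finset.range K, (h - D * k)
        = ∑ k ∈ Finset.range K, (h - D * (K - 1 - k)) := by
      rw [← Finset.sum_range_reflect]
    have : 2 * ∑ k ∈ Finset.range K, (h - D * k)
        = ∑ k ∈ Finset.range K, ((h - D * k) + (h - D * (K - 1 - k))) := by
      rw [Finset.sum_add_distrib, ← hrefl]; ring
    rw [this]
    calc K * h = ∑ _k ∈ Finset.range K, h := by rw [Finset.sum_const, Finset.card_range, smul_eq_mul]
      _ ≤ ∑ k ∈ Finset.range K, ((h - D * k) + (h - D * (K - 1 - k))) := by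
          apply Finset.sum_le_sum
          intro k hk
          simp only [Finset.mem_range] at hk
          have hsum : D * k + D * (K - 1 - k) = D * (K - 1) := by
            rw [← Nat.mul_add]
            congr 1
            omega
          omega
  calc h * h ≤ (D * K) * h := Nat.mul_le_mul_right _ hDK
    _ = D * (K * h) := by ring
    _ ≤ D * (2 * ∑ k ∈ Finset.range K, (h - D * k)) := Nat.mul_le_mul_left _ hpair
    _ ≤ D * (2 * ∑ v ∈ Finset.range h, cfn S e σ v) :=
        Nat.mul_le_mul_left _ (Nat.mul_le_mul_left _ hlayer)
    _ = 2 * D * ∑ v ∈ Finset.range h, cfn S e σ v := by ring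

end Stmt5Aux

namespace Stmt5Aux
variable {E : Type*} {m : ℕ} {S : Fin m → Finset E} {e : E} {σ : ℕ → Fin m}

lemma sum_cfn_le_sum_wait (h : ℕ) :
    ∑ v ∈ Finset.range h, (cfn S e σ v : ℝ≥0∞) ≤
      ∑ t ∈ Finset.range h, waitFn S e t σ := by
  classical
  have step1 : ∀ v ∈ Finset.range h, (cfn S e σ v : ℝ≥0∞) =
      ∑ t ∈ Finset.range h,
        (if t ≤ v ∧ (∀ w, t ≤ w → w < v → e ∉ S (σ w)) then (1:ℝ≥0∞) else 0) := by
    intro v hv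
    simp only [Finset.mem_range] at hv
    rw [cfn_eq_card (S := S) (e := e) (σ := σ) v, Finset.card_filter]
    rw [← Finset.sum_subset (Finset.range_subset_range.2 (by omega : v + 1 ≤ h))
      (fun t _ ht => by
        simp only [Finset.mem_range] at ht
        rw [if_neg]
        rintro ⟨h1, -⟩
        omega)]
    push_cast
    apply Finset.sum_congr rfl
    intro t ht
    simp only [Finset.mem_range] at ht
    have : (t ≤ v ∧ (∀ w, t ≤ w → w < v → e ∉ S (σ w))) ↔
        (∀ w, t ≤ w → w < v → e ∉ S (σ w)) := by
      constructor
      · exact fun x => x.2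
      · exact fun x => ⟨by omega, x⟩
    simp [this]
  calc ∑ v ∈ Finset.range h, (cfn S e σ v : ℝ≥0∞)
      = ∑ v ∈ Finset.range h, ∑ t ∈ Finset.range h,
          (if t ≤ v ∧ (∀ w, t ≤ w → w < v → e ∉ S (σ w)) then (1:ℝ≥0∞) else 0) :=
        Finset.sum_congr rfl step1
    _ = ∑ t ∈ Finset.range h, ∑ v ∈ Finset.range h,
          (if t ≤ v ∧ (∀ w, t ≤ w → w < v → e ∉ S (σ w)) then (1:ℝ≥0∞) else 0) :=
        Finset.sum_comm
    _ ≤ ∑ t ∈ Finset.range h, waitFn S e t σ := by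
        apply Finset.sum_le_sum
        intro t _
        have e1 : ∑ v ∈ Finset.range h,
            (if t ≤ v ∧ (∀ w, t ≤ w → w < v → e ∉ S (σ w)) then (1:ℝ≥0∞) else 0)
            = ∑ v ∈ Finset.Ico t h,
            (if t ≤ v ∧ (∀ w, t ≤ w → w < v → e ∉ S (σ w)) then (1:ℝ≥0∞) else 0) := by
          have hsub : Finset.Ico t h ⊆ Finset.range h := by
            intro v hv
            simp only [Finset.mem_Ico] at hv
            exact Finset.mem_range.2 hv.2
          rw [← Finset.sum_subset hsub
            (fun v hv hv' => by
              rw [if_neg]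
              rintro ⟨h1, -⟩
              exact hv' (Finset.mem_Ico.2 ⟨h1, Finset.mem_range.1 hv⟩))]
        rw [e1, Finset.sum_Ico_eq_sum_range]
        unfold waitFn
        refine le_trans (le_of_eq ?_) (ENNReal.sum_le_tsum (Finset.range (h - t)))
        apply Finset.sum_congr rfl
        intro s _
        have : (t ≤ t + s ∧ (∀ w, t ≤ w → w < t + s → e ∉ S (σ w))) ↔
            (∀ u < s, e ∉ S (σ (t + u))) := by
          constructor
          · rintro ⟨-, hall⟩ u hu
            exact hall (t + u) (by omega) (by omega)
          · intro hall
            refine ⟨by omega, fun w hw hw' => ?_⟩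
            have : w = t + (w - t) := by omega
            rw [this]
            exact hall (w - t) (by omega)
        simp only [this]

lemma key_ennreal (h : ℕ) :
    (h : ℝ≥0∞) * h ≤
      2 * ((Ncnt S e σ h : ℝ≥0∞) + 1) * ∑ t ∈ Finset.range h, waitFn S e t σ := by
  have h1 := key_nat (S := S) (e := e) (σ := σ) h
  have h2 : ((h * h : ℕ) : ℝ≥0∞) ≤
      ((2 * (Ncnt S e σ h + 1) * ∑ v ∈ Finset.range h, cfn S e σ v : ℕ) : ℝ≥0∞) :=
    Nat.cast_le.2 h1
  push_cast at h2
  refine le_trans h2 ?_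
  exact mul_le_mul_right (sum_cfn_le_sum_wait h) _

end Stmt5Aux

namespace Stmt5Aux
variable {E : Type*} {m : ℕ} {S : Fin m → Finset E} {e : E}

lemma measSet (t : ℕ) (P : Fin m → Prop) :
    MeasurableSet {σ : ℕ → Fin m | P (σ t)} := by
  have : {σ : ℕ → Fin m | P (σ t)} = (fun σ : ℕ → Fin m => σ t) ⁻¹' {i | P i} := rfl
  rw [this]
  exact (measurable_pi_apply t) (by trivial)

lemma measurable_wait (t : ℕ) : Measurable (waitFn S e t) := by
  classical
  apply Measurable.ennreal_tsum
  intro s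
  apply Measurable.ite _ measurable_const measurable_const
  have : {σ : ℕ → Fin m | ∀ u < s, e ∉ S (σ (t + u))} =
      ⋂ u ∈ Set.Iio s, (fun σ : ℕ → Fin m => σ (t + u)) ⁻¹' {i | e ∉ S i} := by
    ext σ; simp [Set.mem_iInter]
  rw [this]
  exact MeasurableSet.biInter (Set.to_countable _)
    (fun u _ => (measurable_pi_apply (t + u)) (by trivial))

lemma measurable_Ncnt (h : ℕ) :
    Measurable (fun σ : ℕ → Fin m => ((Ncnt S e σ h : ℝ≥0∞))) := by
  classical
  have : (fun σ : ℕ → Fin m => ((Ncnt S e σ h : ℝ≥0∞))) =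
      fun σ => ∑ t ∈ Finset.range h, (if e ∈ S (σ t) then (1:ℝ≥0∞) else 0) := by
    funext σ
    rw [Ncnt, Finset.card_filter]
    push_cast
    apply Finset.sum_congr rfl
    intro t _
    split <;> simp
  rw [this]
  apply Finset.measurable_sum
  intro t _
  exact Measurable.ite (measSet t (fun i => e ∈ S i)) measurable_const measurable_const

lemma lintegral_Ncnt (μ : Measure (ℕ → Fin m)) [IsProbabilityMeasure μ] (h : ℕ) :
    ∫⁻ σ, ((Ncnt S e σ h : ℝ≥0∞) + 1) ∂μ =
      (∑ t ∈ Finset.range h, ∑ i ∈ Finset.univ.filter (fun i => e ∈ S i),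
        μ {σ | σ t = i}) + 1 := by
  classical
  have hpt : ∀ σ : ℕ → Fin m, ((Ncnt S e σ h : ℝ≥0∞)) =
      ∑ t ∈ Finset.range h, ∑ i ∈ Finset.univ.filter (fun i => e ∈ S i),
        (if σ t = i then (1:ℝ≥0∞) else 0) := by
    intro σ
    rw [Ncnt, Finset.card_filter]
    push_cast
    apply Finset.sum_congr rfl
    intro t _
    have : ∑ i ∈ Finset.univ.filter (fun i => e ∈ S i),
        (if σ t = i then (1:ℝ≥0∞) else 0) =
        if σ t ∈ Finset.univ.filter (fun i => e ∈ S i) then (1:ℝ≥0∞) else 0 := by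
      rw [← Finset.sum_ite_eq' (Finset.univ.filter (fun i => e ∈ S i)) (σ t)
        (fun _ => (1:ℝ≥0∞))]
      apply Finset.sum_congr rfl
      intro i _
      simp [eq_comm]
    rw [this]
    simp only [Finset.mem_filter, Finset.mem_univ, true_and]
  have hmeas : ∀ t i, Measurable (fun σ : ℕ → Fin m =>
      (if σ t = i then (1:ℝ≥0∞) else 0)) := fun t i =>
    Measurable.ite (measSet t (fun j => j = i)) measurable_const measurable_const
  rw [lintegral_add_right _ measurable_const, lintegral_const, measure_univ, mul_one]
  congr 1
  calc ∫⁻ σ, ((Ncnt S e σ h : ℝ≥0∞)) ∂μ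
      = ∫⁻ σ, ∑ t ∈ Finset.range h, ∑ i ∈ Finset.univ.filter (fun i => e ∈ S i),
          (if σ t = i then (1:ℝ≥0∞) else 0) ∂μ := by
        apply lintegral_congr; exact hpt
    _ = ∑ t ∈ Finset.range h, ∑ i ∈ Finset.univ.filter (fun i => e ∈ S i),
          ∫⁻ σ, (if σ t = i then (1:ℝ≥0∞) else 0) ∂μ := by
        rw [lintegral_finset_sum _ (fun t _ => Finset.measurable_sum _ (fun i _ => hmeas t i))]
        apply Finset.sum_congr rfl
        intro t _
        rw [lintegral_finset_sum _ (fun i _ => hmeas t i)]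
    _ = ∑ t ∈ Finset.range h, ∑ i ∈ Finset.univ.filter (fun i => e ∈ S i),
          μ {σ | σ t = i} := by
        apply Finset.sum_congr rfl; intro t _
        apply Finset.sum_congr rfl; intro i _
        have : (fun σ : ℕ → Fin m => (if σ t = i then (1:ℝ≥0∞) else 0)) =
            fun σ => Set.indicator {σ : ℕ → Fin m | σ t = i} (fun _ => 1) σ := by
          funext σ
          rw [Set.indicator_apply]
          rfl
        rw [this]
        exact lintegral_indicator_one (measSet t (fun j => j = i))

end Stmt5Aux

namespace Stmt5Aux
variable {E : Type*} {m : ℕ} {S : Fin m → Finset E} {e : E}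

lemma lintegral_cs (μ : Measure (ℕ → Fin m)) [IsProbabilityMeasure μ] (h : ℕ) :
    (h : ℝ≥0∞) * h / 2 ≤ (∫⁻ σ, ((Ncnt S e σ h : ℝ≥0∞) + 1) ∂μ) *
      ∑ t ∈ Finset.range h, ∫⁻ σ, waitFn S e t σ ∂μ := by
  classical
  set N : (ℕ → Fin m) → ℝ≥0∞ := fun σ => ((Ncnt S e σ h : ℝ≥0∞) + 1) with hN
  set G : (ℕ → Fin m) → ℝ≥0∞ := fun σ => ∑ t ∈ Finset.range h, waitFn S e t σ with hG
  have hNm : Measurable N := (measurable_Ncnt h).add measurable_const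
  have hGm : Measurable G := Finset.measurable_sum _ (fun t _ => measurable_wait t)
  have hpt : ∀ σ, (h : ℝ≥0∞) * h / 2 ≤ N σ * G σ := by
    intro σ
    rw [ENNReal.div_le_iff (by norm_num) (by norm_num)]
    calc (h:ℝ≥0∞) * h
        ≤ 2 * ((Ncnt S e σ h : ℝ≥0∞) + 1) * ∑ t ∈ Finset.range h, waitFn S e t σ :=
          key_ennreal h
      _ = N σ * G σ * 2 := by rw [hN, hG]; ring
  have conj : Real.HolderConjugate 2 2 := Real.HolderConjugate.two_two
  have hcs := ENNReal.lintegral_mul_le_Lp_mul_Lq μ conj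
    (f := fun σ => N σ ^ (1/2 : ℝ)) (g := fun σ => G σ ^ (1/2 : ℝ))
    (hNm.pow_const _).aemeasurable (hGm.pow_const _).aemeasurable
  have hfg : ∀ σ, ((h : ℝ≥0∞) * h / 2) ^ (1/2 : ℝ) ≤ N σ ^ (1/2 : ℝ) * G σ ^ (1/2 : ℝ) := by
    intro σ
    rw [← ENNReal.mul_rpow_of_nonneg _ _ (by norm_num : (0:ℝ) ≤ 1/2)]
    exact ENNReal.rpow_le_rpow (hpt σ) (by norm_num)
  have hlb : ((h : ℝ≥0∞) * h / 2) ^ (1/2 : ℝ) ≤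
      ∫⁻ σ, (fun σ => N σ ^ (1/2 : ℝ)) σ * (fun σ => G σ ^ (1/2 : ℝ)) σ ∂μ := by
    calc ((h : ℝ≥0∞) * h / 2) ^ (1/2 : ℝ)
        = ∫⁻ _, ((h : ℝ≥0∞) * h / 2) ^ (1/2 : ℝ) ∂μ := by
          rw [lintegral_const, measure_univ, mul_one]
      _ ≤ _ := lintegral_mono (fun σ => hfg σ)
  have e2 : ∫⁻ a, (fun σ => N σ ^ (1/2 : ℝ)) a ^ (2:ℝ) ∂μ = ∫⁻ σ, N σ ∂μ := by
    apply lintegral_congr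
    intro σ
    rw [← ENNReal.rpow_mul]
    norm_num
  have e3 : ∫⁻ a, (fun σ => G σ ^ (1/2 : ℝ)) a ^ (2:ℝ) ∂μ = ∫⁻ σ, G σ ∂μ := by
    apply lintegral_congr
    intro σ
    rw [← ENNReal.rpow_mul]
    norm_num
  rw [e2, e3] at hcs
  have key : ((h : ℝ≥0∞) * h / 2) ^ (1/2 : ℝ) ≤
      ((∫⁻ σ, N σ ∂μ) * ∫⁻ σ, G σ ∂μ) ^ (1/2 : ℝ) := by
    rw [ENNReal.mul_rpow_of_nonneg _ _ (by norm_num : (0:ℝ) ≤ 1/2)]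
    exact le_trans hlb hcs
  have key2 := ENNReal.rpow_le_rpow key (by norm_num : (0:ℝ) ≤ 2)
  rw [← ENNReal.rpow_mul, ← ENNReal.rpow_mul] at key2
  norm_num at key2
  calc (h : ℝ≥0∞) * h / 2 ≤ (∫⁻ σ, N σ ∂μ) * ∫⁻ σ, G σ ∂μ := key2
    _ = (∫⁻ σ, N σ ∂μ) * ∑ t ∈ Finset.range h, ∫⁻ σ, waitFn S e t σ ∂μ := by
        rw [hG]
        rw [lintegral_finset_sum _ (fun t _ => measurable_wait t)]

end Stmt5Aux


/-- For any valid stochastic schedule (a probability measure `μ` on test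
sequences) with limiting relative test frequencies `q_i` and `Q_e =
∑_{i : e ∈ S_i} q_i > 0`, the long-run average expected detection time `A_e`
of each element `e` is at least `1/(2 Q_e)`.  Consequently the value
`∑_e p_e/Q_e` of the memoryless schedule with frequencies `q` — hence the
optimal memoryless value — is at most twice the weighted-sum objective
`∑_e p_e A_e` of the stochastic schedule. -/
theorem stmt_5 {E : Type*} [Fintype E] {m : ℕ} (S : Fin m → Finset E)
    (μ : Measure (ℕ → Fin m)) [IsProbabilityMeasure μ]
    (q : Fin m → ℝ≥0∞)
    (hfreq : ∀ i, Tendsto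
      (fun h : ℕ => (∑ t ∈ Finset.range h, μ {σ | σ t = i}) / (h : ℝ≥0∞))
      atTop (𝓝 (q i)))
    (Q : E → ℝ≥0∞)
    (hQ : ∀ e, Q e = ∑ i ∈ Finset.univ.filter (fun i => e ∈ S i), q i)
    (hQpos : ∀ e, 0 < Q e)
    (A : E → ℝ≥0∞)
    (hA : ∀ e, Tendsto
      (fun h : ℕ =>
        (∑ t ∈ Finset.range h, ∫⁻ σ, waitFn S e t σ ∂μ) / (h : ℝ≥0∞))
      atTop (𝓝 (A e)))
    (p : E → ℝ≥0∞) (hp : ∑ e, p e = 1) :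
    (∀ e, 1 / (2 * Q e) ≤ A e) ∧
    ∑ e, p e / Q e ≤ 2 * ∑ e, p e * A e := by
  classical
  have main : ∀ e, 1 / (2 * Q e) ≤ A e := by
    intro e
    set B : ℕ → ℝ≥0∞ := fun h =>
      (∑ t ∈ Finset.range h, ∑ i ∈ Finset.univ.filter (fun i => e ∈ S i),
        μ {σ | σ t = i}) + 1 with hB
    set SW : ℕ → ℝ≥0∞ := fun h =>
      ∑ t ∈ Finset.range h, ∫⁻ σ, waitFn S e t σ ∂μ with hSW
    have hBpos : ∀ h, B h ≠ 0 := fun h =>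
      ne_of_gt (lt_of_lt_of_le zero_lt_one le_add_self)
    have hBfin : ∀ h, B h ≠ ∞ := by
      intro h
      rw [hB]
      refine ENNReal.add_ne_top.2 ⟨?_, ENNReal.one_ne_top⟩
      refine (ENNReal.sum_lt_top.2 fun t _ => ?_).ne
      exact ENNReal.sum_lt_top.2 fun i _ => lt_of_le_of_lt prob_le_one ENNReal.one_lt_top
    -- CS inequality with B
    have hCS : ∀ h : ℕ, (h : ℝ≥0∞) * h / 2 ≤ B h * SW h := by
      intro h
      have := Stmt5Aux.lintegral_cs (S := S) (e := e) μ h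
      rwa [Stmt5Aux.lintegral_Ncnt μ h] at this
    -- eventual pointwise bound
    have hev : ∀ h : ℕ, 1 ≤ h → (2 * (B h / h))⁻¹ ≤ SW h / h := by
      intro h hh
      have hne0 : (h : ℝ≥0∞) ≠ 0 := Nat.cast_ne_zero.2 (by omega)
      have hnetop : (h : ℝ≥0∞) ≠ ∞ := ENNReal.natCast_ne_top h
      have h2B0 : 2 * B h ≠ 0 := by
        simp [hBpos h]
      have h2Btop : 2 * B h ≠ ∞ := ENNReal.mul_ne_top (by norm_num) (hBfin h)
      have e1 : (2 * (B h / h))⁻¹ = (h : ℝ≥0∞) / (2 * B h) := by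
        rw [← mul_div_assoc, ENNReal.inv_div (Or.inl hnetop) (Or.inl hne0)]
      rw [e1, ENNReal.div_le_iff h2B0 h2Btop]
      -- goal : h ≤ SW h / h * (2 * B h)
      have e2 : SW h / h * (2 * B h) = SW h * (2 * B h) / h := by
        rw [div_eq_mul_inv, div_eq_mul_inv]
        ring
      rw [e2]
      have e3 : ((h : ℝ≥0∞) * h) / h = h := by
        rw [mul_div_assoc, ENNReal.div_self hne0 hnetop, mul_one]
      calc (h : ℝ≥0∞) = (h : ℝ≥0∞) * h / h := e3.symm
        _ ≤ SW h * (2 * B h) / h := by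
            apply ENNReal.div_le_div_right
            calc (h : ℝ≥0∞) * h = (h : ℝ≥0∞) * h / 2 * 2 := by
                  rw [ENNReal.div_mul_cancel (by norm_num) (by norm_num)]
              _ ≤ B h * SW h * 2 := mul_le_mul_left (hCS h) 2
              _ = SW h * (2 * B h) := by ring
    -- limit of the lower bound
    have hBlim : Tendsto (fun h : ℕ => B h / h) atTop (𝓝 (Q e)) := by
      have e4 : ∀ h : ℕ, B h / h =
          (∑ i ∈ Finset.univ.filter (fun i => e ∈ S i),
            (∑ t ∈ Finset.range h, μ {σ | σ t = i}) / (h : ℝ≥0∞)) + (h : ℝ≥0∞)⁻¹ := by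
        intro h
        rw [hB, ENNReal.add_div, Finset.sum_comm, one_div]
        simp only [div_eq_mul_inv, Finset.sum_mul]
      simp only [e4]
      have h1 : Tendsto (fun h : ℕ =>
          ∑ i ∈ Finset.univ.filter (fun i => e ∈ S i),
            (∑ t ∈ Finset.range h, μ {σ | σ t = i}) / (h : ℝ≥0∞)) atTop (𝓝 (Q e)) := by
        rw [hQ e]
        exact tendsto_finset_sum _ (fun i _ => hfreq i)
      have h2 := ENNReal.tendsto_inv_nat_nhds_zero
      have := Tendsto.add h1 h2
      simpa using this
    have hLlim : Tendsto (fun h : ℕ => (2 * (B h / h))⁻¹) atTop (𝓝 ((2 * Q e)⁻¹)) := by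
      apply Filter.Tendsto.inv
      exact ENNReal.Tendsto.const_mul hBlim (Or.inl (hQpos e).ne')
    have hle : (2 * Q e)⁻¹ ≤ A e := by
      apply le_of_tendsto_of_tendsto hLlim (hA e)
      filter_upwards [eventually_ge_atTop 1] with h hh
      exact hev h hh
    rwa [one_div]
  refine ⟨main, ?_⟩
  have hterm : ∀ e, p e / Q e ≤ p e * (2 * A e) := by
    intro e
    rw [div_eq_mul_inv]
    apply mul_le_mul_right
    have h1 : (2 * Q e)⁻¹ ≤ A e := by rw [← one_div]; exact main e
    have h2 : (2:ℝ≥0∞)⁻¹ * (Q e)⁻¹ ≤ A e := by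
      rwa [← ENNReal.mul_inv (Or.inl (by norm_num)) (Or.inl (by norm_num))]
    calc (Q e)⁻¹ = 2 * ((2:ℝ≥0∞)⁻¹ * (Q e)⁻¹) := by
          rw [← mul_assoc, ENNReal.mul_inv_cancel (by norm_num) (by norm_num), one_mul]
      _ ≤ 2 * A e := mul_le_mul_right h2 2
  calc ∑ e, p e / Q e ≤ ∑ e, p e * (2 * A e) := Finset.sum_le_sum (fun e _ => hterm e)
    _ = 2 * ∑ e, p e * A e := by
        rw [Finset.mul_sum]
        apply Finset.sum_congr rfl
        intro e _
        ring
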